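/- For every real number α > 1 there exists a constant C = C(α) > 0 such that for every positive integer n and every x ∈ [0, 1], one has Q_{n+1,α}(x)^{1/α} − Q_{n,α}(x)^{1/α} ≥ C · x^{n+1}. -/

import Mathlib

open Polynomial MeasureTheory

/-- `Q_{n,α}(x) = Σ_{j=0}^n ((α)_j / j!) x^j`, the `n`-th partial sum of the binomial
series of `(1-x)^(-α)`, where `(α)_j = α(α+1)⋯(α+j-1)` is the rising factorial. -/
noncomputable def Qpoly (α : ℝ) (n : ℕ) (x : ℝ) : ℝ :=
  ∑ j ∈ Finset.range (n + 1), (∏ i ∈ Finset.range j, (α + i)) / (j.factorial : ℝ) * x ^ j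

namespace Stmt14Aux

/-- `a α j = (α)_j / j!`. -/
noncomputable def a (α : ℝ) (j : ℕ) : ℝ :=
  (∏ i ∈ Finset.range j, (α + i)) / (j.factorial : ℝ)

/-- `b α n = (α+1)_n / n!`. -/
noncomputable def b (α : ℝ) (n : ℕ) : ℝ :=
  (∏ i ∈ Finset.range n, (α + 1 + i)) / (n.factorial : ℝ)

lemma a_pos {α : ℝ} (hα : 0 < α) (j : ℕ) : 0 < a α j := by
  have h : 0 < ∏ i ∈ Finset.range j, (α + (i:ℝ)) := by
    apply Finset.prod_pos
    intro i _
    have : (0:ℝ) ≤ i := Nat.cast_nonneg i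
    linarith
  exact div_pos h (by positivity)

lemma b_pos {α : ℝ} (hα : 0 < α) (n : ℕ) : 0 < b α n := by
  have h : 0 < ∏ i ∈ Finset.range n, (α + 1 + (i:ℝ)) := by
    apply Finset.prod_pos
    intro i _
    have : (0:ℝ) ≤ i := Nat.cast_nonneg i
    linarith
  exact div_pos h (by positivity)

lemma prod_shift (α : ℝ) (n : ℕ) :
    ∏ i ∈ Finset.range (n + 1), (α + i) = α * ∏ i ∈ Finset.range n, (α + 1 + i) := by
  rw [Finset.prod_range_succ']
  have h : ∀ i ∈ Finset.range n, (α + ((i + 1 : ℕ) : ℝ)) = α + 1 + i := by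
    intro i _
    push_cast
    ring
  rw [Finset.prod_congr rfl h]
  push_cast
  ring

lemma sum_a (α : ℝ) (n : ℕ) : ∑ j ∈ Finset.range (n + 1), a α j = b α n := by
  induction n with
  | zero => simp [a, b]
  | succ n ih =>
    rw [Finset.sum_range_succ, ih]
    unfold a b
    rw [prod_shift, Finset.prod_range_succ, Nat.factorial_succ]
    have hfn : ((n.factorial : ℝ)) ≠ 0 := by positivity
    have hn1 : ((n:ℝ) + 1) ≠ 0 := by positivity
    push_cast
    field_simp
    ring

lemma a_mul (α : ℝ) (m : ℕ) : a α m * (α + m) = α * b α m := by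
  unfold a b
  have h : (∏ i ∈ Finset.range m, (α + i)) * (α + m) = α * ∏ i ∈ Finset.range m, (α + 1 + i) := by
    rw [← Finset.prod_range_succ (fun i => α + (i:ℝ)) m, prod_shift]
  have hf : ((m.factorial : ℝ)) ≠ 0 := by positivity
  field_simp
  linarith [h]

/-- Key elementary inequality: for `α ≥ 1`, `t ≥ 1`,
`((t+α+1)/(t+α))^α ≤ (t+α)/t`. -/
lemma key {α t : ℝ} (hα : 1 ≤ α) (ht : 1 ≤ t) :
    ((t + α + 1) / (t + α)) ^ α ≤ (t + α) / t := by
  have htα : (0:ℝ) < t + α := by linarith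
  set y : ℝ := 1 / (t + α) with hy
  have hy0 : 0 < y := by positivity
  have hy1 : y < 1 := by
    rw [hy, div_lt_one htα]; linarith
  have h1 : (t + α + 1) / (t + α) = 1 + y := by
    rw [hy]; field_simp
  have h1y : (0:ℝ) < 1 - y := by linarith
  have h2 : (1:ℝ) + y ≤ (1 - y)⁻¹ := by
    have hmul : (1 + y) * (1 - y) ≤ 1 := by nlinarith
    calc 1 + y = (1 + y) * (1 - y) * (1 - y)⁻¹ := by field_simp
      _ ≤ 1 * (1 - y)⁻¹ := mul_le_mul_of_nonneg_right hmul (by positivity)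
      _ = (1 - y)⁻¹ := one_mul _
  have h5 : (1 + y) ^ α ≤ ((1 - y)⁻¹) ^ α :=
    Real.rpow_le_rpow (by linarith) h2 (by linarith)
  have h6 : 1 - α * y ≤ (1 - y) ^ α := by
    have h := one_add_mul_self_le_rpow_one_add (s := -y) (by linarith) hα
    calc 1 - α * y = 1 + α * (-y) := by ring
      _ ≤ (1 + -y) ^ α := h
      _ = (1 - y) ^ α := by ring_nf
  have hty : 1 - α * y = t / (t + α) := by
    rw [hy]; field_simp; ring
  have h7 : (0:ℝ) < t / (t + α) := by positivity
  have h8 : ((1 - y)⁻¹) ^ α = ((1 - y) ^ α)⁻¹ := Real.inv_rpow (by linarith) α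
  have h9 : ((1 - y) ^ α)⁻¹ ≤ (t / (t + α))⁻¹ := by
    apply inv_anti₀ h7
    rw [← hty]; exact h6
  calc ((t + α + 1) / (t + α)) ^ α = (1 + y) ^ α := by rw [h1]
    _ ≤ ((1 - y) ^ α)⁻¹ := h5.trans_eq h8
    _ ≤ (t / (t + α))⁻¹ := h9
    _ = (t + α) / t := by rw [inv_div]

lemma b_succ (α : ℝ) (n : ℕ) (hα : 0 < α) :
    b α (n + 1) = b α n * ((α + 1 + n) / ((n:ℝ) + 1)) := by
  unfold b
  rw [Finset.prod_range_succ, Nat.factorial_succ]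
  have hfn : ((n.factorial : ℝ)) ≠ 0 := by positivity
  have hn1 : ((n:ℝ) + 1) ≠ 0 := by positivity
  push_cast
  field_simp

lemma b_lb {α : ℝ} (hα : 1 < α) (n : ℕ) :
    (((n:ℝ) + 1 + α) / (α + 1)) ^ α ≤ b α n := by
  have hα0 : (0:ℝ) < α := by linarith
  have hα1 : (0:ℝ) < α + 1 := by linarith
  induction n with
  | zero =>
    have : (((0:ℕ):ℝ) + 1 + α) / (α + 1) = 1 := by
      push_cast; rw [div_eq_one_iff_eq (by linarith)]; ring
    rw [this, Real.one_rpow]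
    simp [b]
  | succ n ih =>
    have hn1 : (0:ℝ) < (n:ℝ) + 1 := by positivity
    have hnα : (0:ℝ) < (n:ℝ) + 1 + α := by linarith
    have hsplit : (((n:ℝ) + 1) + 1 + α) / (α + 1)
        = (((n:ℝ) + 1 + α) / (α + 1)) * ((((n:ℝ) + 1) + α + 1) / (((n:ℝ) + 1) + α)) := by
      field_simp
      ring
    have hcast : (((n + 1 : ℕ):ℝ) + 1 + α) = ((n:ℝ) + 1) + 1 + α := by push_cast; ring
    rw [hcast, hsplit, Real.mul_rpow (by positivity) (by positivity)]
    have hkey := key hα.le (le_add_of_nonneg_left (Nat.cast_nonneg n) : (1:ℝ) ≤ (n:ℝ) + 1)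
    have hb := b_succ α n hα0
    have hratio : ((n:ℝ) + 1 + α) / ((n:ℝ) + 1) = (α + 1 + n) / ((n:ℝ) + 1) := by ring_nf
    calc (((n:ℝ) + 1 + α) / (α + 1)) ^ α * ((((n:ℝ) + 1) + α + 1) / (((n:ℝ) + 1) + α)) ^ α
        ≤ b α n * ((α + 1 + n) / ((n:ℝ) + 1)) := by
          apply mul_le_mul ih ?_ (by positivity) (le_trans (by positivity) ih)
          have h := key hα.le (le_add_of_nonneg_left (Nat.cast_nonneg n) : (1:ℝ) ≤ (n:ℝ) + 1)
          calc ((((n:ℝ) + 1) + α + 1) / (((n:ℝ) + 1) + α)) ^ α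
              ≤ (((n:ℝ) + 1) + α) / ((n:ℝ) + 1) := h
            _ = (α + 1 + n) / ((n:ℝ) + 1) := by ring_nf
      _ = b α (n + 1) := by rw [hb]

/-- concavity step -/
lemma conc {α A B : ℝ} (hα : 1 ≤ α) (hA : 0 < A) (hAB : A ≤ B) :
    (B - A) * B ^ (1/α - 1) / α ≤ B ^ (1/α) - A ^ (1/α) := by
  have hB : 0 < B := lt_of_lt_of_le hA hAB
  have hα0 : 0 < α := by linarith
  have hr1 : A / B ≤ 1 := (div_le_one hB).mpr hAB
  have hr0 : 0 < A / B := div_pos hA hB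
  have hp1 : 1/α ≤ 1 := by rw [div_le_one hα0]; exact hα
  have bern : (A / B) ^ (1/α) ≤ 1 + (1/α) * (A / B - 1) := by
    have h := rpow_one_add_le_one_add_mul_self (s := A/B - 1) (by linarith) (by positivity) hp1
    have he : 1 + (A/B - 1) = A/B := by ring
    rwa [he] at h
  have hApow : A ^ (1/α) = B ^ (1/α) * (A / B) ^ (1/α) := by
    rw [← Real.mul_rpow hB.le hr0.le]
    congr 1
    field_simp
  have hBpow : (0:ℝ) ≤ B ^ (1/α) := Real.rpow_nonneg hB.le _
  have step : A ^ (1/α) ≤ B ^ (1/α) * (1 + (1/α) * (A / B - 1)) := by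
    rw [hApow]; exact mul_le_mul_of_nonneg_left bern hBpow
  have hBsub : B ^ (1/α - 1) = B ^ (1/α) / B := by
    rw [Real.rpow_sub hB, Real.rpow_one]
  rw [hBsub]
  have hrew : (B - A) * (B ^ (1/α) / B) / α = B ^ (1/α) * ((1/α) * (1 - A/B)) := by
    field_simp
  rw [hrew]
  have expand : B ^ (1/α) * (1 + (1/α) * (A/B - 1))
      = B ^ (1/α) - B ^ (1/α) * ((1/α) * (1 - A/B)) := by ring
  linarith [step, expand]

lemma Qpoly_eq (α : ℝ) (n : ℕ) (x : ℝ) :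
    Qpoly α n x = ∑ j ∈ Finset.range (n + 1), a α j * x ^ j := rfl

lemma one_le_Q {α x : ℝ} (hα : 0 < α) (hx : 0 ≤ x) (n : ℕ) : 1 ≤ Qpoly α n x := by
  rw [Qpoly_eq]
  have h0 : a α 0 * x ^ 0 = 1 := by simp [a]
  calc (1:ℝ) = a α 0 * x ^ 0 := h0.symm
    _ ≤ ∑ j ∈ Finset.range (n + 1), a α j * x ^ j := by
        apply Finset.single_le_sum (f := fun j => a α j * x ^ j)
        · intro i _
          exact mul_nonneg (a_pos hα i).le (pow_nonneg hx i)
        · simp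

lemma Q_le_b {α x : ℝ} (hα : 0 < α) (hx : 0 ≤ x) (hx1 : x ≤ 1) (n : ℕ) :
    Qpoly α n x ≤ b α n := by
  rw [Qpoly_eq, ← sum_a]
  apply Finset.sum_le_sum
  intro j _
  have := a_pos hα j
  calc a α j * x ^ j ≤ a α j * 1 := by
        apply mul_le_mul_of_nonneg_left _ this.le
        exact pow_le_one₀ hx hx1
    _ = a α j := mul_one _

lemma Q_succ (α : ℝ) (n : ℕ) (x : ℝ) :
    Qpoly α (n + 1) x = Qpoly α n x + a α (n + 1) * x ^ (n + 1) := by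
  rw [Qpoly_eq, Qpoly_eq, Finset.sum_range_succ]

end Stmt14Aux

open Stmt14Aux in
/-- For `α > 1`, `Q_{n+1,α}(x)^(1/α) - Q_{n,α}(x)^(1/α) ≥ C(α) x^(n+1)` on `[0,1]`. -/
theorem stmt14 (α : ℝ) (hα : 1 < α) :
    ∃ C : ℝ, 0 < C ∧ ∀ n : ℕ, 0 < n → ∀ x ∈ Set.Icc (0 : ℝ) 1,
      C * x ^ (n + 1) ≤ (Qpoly α (n + 1) x) ^ (1 / α) - (Qpoly α n x) ^ (1 / α) := by
  have hα0 : (0:ℝ) < α := by linarith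
  refine ⟨1 / (α + 1), by positivity, ?_⟩
  intro n hn x hx
  obtain ⟨hx0, hx1⟩ := hx
  set m := n + 1 with hm
  set A := Qpoly α n x with hAdef
  set B := Qpoly α m x with hBdef
  have hA1 : 1 ≤ A := one_le_Q hα0 hx0 n
  have hA : 0 < A := by linarith
  have hBA : B = A + a α m * x ^ m := Q_succ α n x
  have ham : 0 < a α m := a_pos hα0 m
  have hxm : 0 ≤ x ^ m := pow_nonneg hx0 m
  have hAB : A ≤ B := by
    rw [hBA]
    nlinarith
  have hB : 0 < B := lt_of_lt_of_le hA hAB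
  have hbm : 0 < b α m := b_pos hα0 m
  have hBb : B ≤ b α m := Q_le_b hα0 hx0 hx1 m
  have hαm : (0:ℝ) < α + m := by positivity
  have step1 : (B - A) * B ^ (1/α - 1) / α ≤ B ^ (1/α) - A ^ (1/α) := conc hα.le hA hAB
  have hBA' : B - A = a α m * x ^ m := by rw [hBA]; ring
  have hexp : 1/α - 1 ≤ 0 := by
    have : 1/α ≤ 1 := by rw [div_le_one hα0]; exact hα.le
    linarith
  have step2 : b α m ^ (1/α - 1) ≤ B ^ (1/α - 1) :=
    Real.rpow_le_rpow_of_nonpos hB hBb hexp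
  have hbla : ((m:ℝ) + 1 + α) / (α + 1) ≤ (b α m) ^ (1/α) := by
    have h1 := b_lb hα m
    have hbase : (0:ℝ) ≤ ((m:ℝ) + 1 + α) / (α + 1) := by positivity
    have h2 := Real.rpow_le_rpow (Real.rpow_nonneg hbase α) h1 (by positivity : (0:ℝ) ≤ 1/α)
    rwa [← Real.rpow_mul hbase, mul_one_div, div_self hα0.ne', Real.rpow_one] at h2
  have hab := a_mul α m
  have key2 : a α m * (b α m) ^ (1/α - 1) / α = (b α m) ^ (1/α) / (α + m) := by
    rw [Real.rpow_sub hbm, Real.rpow_one]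
    field_simp
    linear_combination hab
  have h : 1 / (α + 1) ≤ a α m * (b α m) ^ (1/α - 1) / α := by
    rw [key2, div_le_div_iff₀ (by positivity) hαm]
    have h3 := (div_le_iff₀ (by positivity : (0:ℝ) < α + 1)).mp hbla
    nlinarith [Real.rpow_nonneg hbm.le (1/α)]
  calc 1 / (α + 1) * x ^ m ≤ (a α m * (b α m) ^ (1/α - 1) / α) * x ^ m :=
        mul_le_mul_of_nonneg_right h hxm
    _ = (a α m * x ^ m) * (b α m) ^ (1/α - 1) / α := by ring
    _ ≤ (a α m * x ^ m) * B ^ (1/α - 1) / α := by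
        gcongr
    _ = (B - A) * B ^ (1/α - 1) / α := by rw [hBA']
    _ ≤ B ^ (1/α) - A ^ (1/α) := step1
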